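/- Under the independence and conditional independence assumptions, the conditional mutual information I(x; y | z) equals I(x; y). -/

import Mathlib

theorem stmt_1 {α β γ : Type*} [Fintype α] [Fintype β] [Fintype γ]
    (p : α → β → γ → ℝ)
    (hnn : ∀ x y z, 0 ≤ p x y z)
    (hsum : ∑ x, ∑ y, ∑ z, p x y z = 1)
    (px : α → ℝ) (py : β → ℝ) (pz : γ → ℝ)
    (pxy : α → β → ℝ) (pxz : α → γ → ℝ) (pyz : β → γ → ℝ)
    (hpx : ∀ x, px x = ∑ y, ∑ z, p x y z)
    (hpy : ∀ y, py y = ∑ x, ∑ z, p x y z)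
    (hpz : ∀ z, pz z = ∑ x, ∑ y, p x y z)
    (hpxy : ∀ x y, pxy x y = ∑ z, p x y z)
    (hpxz : ∀ x z, pxz x z = ∑ y, p x y z)
    (hpyz : ∀ y z, pyz y z = ∑ x, p x y z)
    (hindep : ∀ y z, pyz y z = py y * pz z)
    (hcond : ∀ x y z, 0 < px x → p x y z * px x = pxy x y * pxz x z) :
    ∑ x, ∑ y, ∑ z, p x y z * Real.log (p x y z * pz z / (pxz x z * pyz y z))
      = ∑ x, ∑ y, pxy x y * Real.log (pxy x y / (px x * py y)) := by
  refine Finset.sum_congr rfl fun x _ => Finset.sum_congr rfl fun y _ => ?_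
  rw [hpxy, Finset.sum_mul]
  refine Finset.sum_congr rfl fun z _ => ?_
  by_cases hp : p x y z = 0
  · simp [hp]
  have hpos : 0 < p x y z := lt_of_le_of_ne (hnn x y z) (Ne.symm hp)
  have hpx_pos : 0 < px x := by
    rw [hpx]
    calc 0 < p x y z := hpos
    _ ≤ ∑ z', p x y z' := Finset.single_le_sum (fun i _ => hnn x y i) (Finset.mem_univ z)
    _ ≤ ∑ y', ∑ z', p x y' z' :=
      Finset.single_le_sum (fun i _ => Finset.sum_nonneg fun j _ => hnn x i j)
        (Finset.mem_univ y)
  have hpy_pos : 0 < py y := by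
    rw [hpy]
    calc 0 < p x y z := hpos
    _ ≤ ∑ z', p x y z' := Finset.single_le_sum (fun i _ => hnn x y i) (Finset.mem_univ z)
    _ ≤ ∑ x', ∑ z', p x' y z' :=
      Finset.single_le_sum (fun i _ => Finset.sum_nonneg fun j _ => hnn i y j)
        (Finset.mem_univ x)
  have hpz_pos : 0 < pz z := by
    rw [hpz]
    calc 0 < p x y z := hpos
    _ ≤ ∑ y', p x y' z := Finset.single_le_sum (fun i _ => hnn x i z) (Finset.mem_univ y)
    _ ≤ ∑ x', ∑ y', p x' y' z :=
      Finset.single_le_sum (fun i _ => Finset.sum_nonneg fun j _ => hnn i j z)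
        (Finset.mem_univ x)
  have hpxz_pos : 0 < pxz x z := by
    rw [hpxz]
    exact lt_of_lt_of_le hpos
      (Finset.single_le_sum (fun i _ => hnn x i z) (Finset.mem_univ y))
  have hc := hcond x y z hpx_pos
  congr 2
  rw [hindep]
  field_simp
  linear_combination hc + pxz x z * hpxy x y
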